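/- Let Ω ⊂ ℝ^d be a convex body with B(0,1) ⊂ Ω ⊂ B(0,d) and Dubiner-type metric ρ. For every integer n ≥ 2 and every x, y ∈ Ω with ρ(x,y) ≥ 2π√(2d)/(n−1), there exists a polynomial P of total degree at most n in d variables such that P(y) = 1, P(x) = 0, and 0 ≤ P(z) ≤ 1 for all z ∈ Ω. -/

import Mathlib

open Real Polynomial


lemma cheb_natDegree_aux (m : ℕ) : (Polynomial.Chebyshev.T ℝ (m:ℤ)).natDegree ≤ m ∧
    (Polynomial.Chebyshev.T ℝ ((m:ℤ)+1)).natDegree ≤ m+1 := by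
  induction m with
  | zero => simp [Polynomial.Chebyshev.T_zero, Polynomial.Chebyshev.T_one]
  | succ k ih =>
    constructor
    · exact_mod_cast ih.2
    · have h : Polynomial.Chebyshev.T ℝ ((k:ℤ)+1+1) =
          2 * Polynomial.X * Polynomial.Chebyshev.T ℝ ((k:ℤ)+1) - Polynomial.Chebyshev.T ℝ (k:ℤ) := by
        have := Polynomial.Chebyshev.T_add_two ℝ (k:ℤ)
        rw [show ((k:ℤ)+1+1) = (k:ℤ)+2 by ring, this]
      have h2 : ((k+1:ℕ):ℤ) + 1 = (k:ℤ)+1+1 := by push_cast; ring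
      rw [h2, h]
      refine le_trans (Polynomial.natDegree_sub_le _ _) ?_
      have hb : (2 * Polynomial.X * Polynomial.Chebyshev.T ℝ ((k:ℤ)+1)).natDegree ≤ k + 2 := by
        refine le_trans (Polynomial.natDegree_mul_le) ?_
        have h3 : (2 * Polynomial.X : Polynomial ℝ).natDegree ≤ 1 := by
          refine le_trans (Polynomial.natDegree_mul_le) ?_
          simp
        have := ih.2
        omega
      have := ih.1
      simp only [sup_le_iff]
      omega

lemma cheb_natDegree_le (m : ℕ) : (Polynomial.Chebyshev.T ℝ (m:ℤ)).natDegree ≤ m :=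
  (cheb_natDegree_aux m).1

lemma cheb_abs_le (m : ℤ) {u : ℝ} (h1 : -1 ≤ u) (h2 : u ≤ 1) :
    |(Polynomial.Chebyshev.T ℝ m).eval u| ≤ 1 := by
  have : u = Real.cos (Real.arccos u) := (Real.cos_arccos h1 h2).symm
  rw [this, Polynomial.Chebyshev.T_real_cos]
  exact Real.abs_cos_le_one _

lemma one_sub_two_sin_sq (ψ : ℝ) : 1 - 2 * Real.sin (ψ/2) ^ 2 = Real.cos ψ := by
  have := Real.sin_sq_eq_half_sub (ψ/2)
  rw [this]; ring_nf

lemma sin_lip (a b : ℝ) : |Real.sin a - Real.sin b| ≤ |a - b| := by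
  rw [Real.sin_sub_sin]
  have h1 := Real.abs_sin_le_abs (x := (a-b)/2)
  have h2 := Real.abs_cos_le_one ((a+b)/2)
  calc |2 * Real.sin ((a-b)/2) * Real.cos ((a+b)/2)|
      = 2 * |Real.sin ((a-b)/2)| * |Real.cos ((a+b)/2)| := by
        rw [abs_mul, abs_mul]; norm_num
    _ ≤ 2 * |(a-b)/2| * 1 := by
        apply mul_le_mul (by linarith) h2 (abs_nonneg _) (by positivity)
    _ = |a - b| := by rw [abs_div]; simp; linarith [abs_nonneg (a-b)]



lemma sin_half_mono {a b : ℝ} (h0 : 0 ≤ a) (hab : a ≤ b) (hb : b ≤ π) :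
    Real.sin (a/2) ≤ Real.sin (b/2) := by
  apply Real.sin_le_sin_of_le_of_le_pi_div_two (by linarith [Real.pi_pos]) (by linarith) (by linarith)

lemma sin_half_strict {a b : ℝ} (h0 : 0 ≤ a) (hab : a < b) (hb : b ≤ π) :
    Real.sin (a/2) < Real.sin (b/2) := by
  apply Real.strictMonoOn_sin ⟨by linarith [Real.pi_pos], by linarith⟩
    ⟨by linarith [Real.pi_pos], by linarith⟩ (by linarith)

lemma cos_half_mono {a b : ℝ} (h0 : 0 ≤ a) (hab : a ≤ b) (hb : b ≤ π) :
    Real.cos (b/2) ≤ Real.cos (a/2) := by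
  apply Real.cos_le_cos_of_nonneg_of_le_pi (by linarith) (by linarith [Real.pi_pos]) (by linarith)

lemma sin_half_nonneg {a : ℝ} (h0 : 0 ≤ a) (ha : a ≤ π) : 0 ≤ Real.sin (a/2) :=
  Real.sin_nonneg_of_nonneg_of_le_pi (by linarith) (by linarith [Real.pi_pos])

lemma cos_half_nonneg {a : ℝ} (h0 : 0 ≤ a) (ha : a ≤ π) : 0 ≤ Real.cos (a/2) :=
  Real.cos_nonneg_of_mem_Icc ⟨by linarith [Real.pi_pos], by linarith⟩

set_option maxHeartbeats 1000000 in
lemma univ_core (m : ℕ) (hm : 1 ≤ m) (k : ℤ) (θ₁ θ₂ : ℝ)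
    (h0 : 0 ≤ θ₁) (hπ : θ₂ ≤ π)
    (hk1 : θ₁ ≤ k * π / m) (hk2 : (k + 1) * π / m ≤ θ₂) :
    ∃ q : Polynomial ℝ, q.natDegree ≤ m ∧
      (∀ t, 0 ≤ t → t ≤ 1 → 0 ≤ Polynomial.eval t q ∧ Polynomial.eval t q ≤ 1) ∧
      Polynomial.eval (Real.sin (θ₁/2) ^ 2) q = (1 + Real.cos (k * π)) / 2 ∧
      Polynomial.eval (Real.sin (θ₂/2) ^ 2) q = (1 + Real.cos ((k+1) * π)) / 2 := by
  have hπ0 := Real.pi_pos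
  have hm0 : (0:ℝ) < m := by exact_mod_cast hm
  set ψ₁ : ℝ := k * π / m with hψ₁
  set ψ₂ : ℝ := (k + 1) * π / m with hψ₂
  have hψlt : ψ₁ < ψ₂ := by rw [hψ₁, hψ₂]; gcongr; linarith
  have hθlt : θ₁ < θ₂ := lt_of_le_of_lt hk1 (lt_of_lt_of_le hψlt hk2)
  have hψ₁0 : 0 ≤ ψ₁ := le_trans h0 hk1
  have hψ₂π : ψ₂ ≤ π := le_trans hk2 hπ
  -- abbreviations
  set τ₁ : ℝ := Real.sin (θ₁/2) ^ 2 with hτ₁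
  set τ₂ : ℝ := Real.sin (θ₂/2) ^ 2 with hτ₂
  set A : ℝ := Real.sin (ψ₁/2) ^ 2 with hA
  set B : ℝ := Real.sin (ψ₂/2) ^ 2 with hB
  have hs1 : Real.sin (θ₁/2) ≤ Real.sin (ψ₁/2) := sin_half_mono h0 hk1 (by linarith)
  have hs2 : Real.sin (ψ₂/2) ≤ Real.sin (θ₂/2) := sin_half_mono (by linarith) hk2 hπ
  have hs12 : Real.sin (ψ₁/2) < Real.sin (ψ₂/2) := sin_half_strict hψ₁0 hψlt hψ₂π
  have hc1 : Real.cos (ψ₁/2) ≤ Real.cos (θ₁/2) := cos_half_mono h0 hk1 (by linarith)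
  have hc2 : Real.cos (θ₂/2) ≤ Real.cos (ψ₂/2) := cos_half_mono (by linarith) hk2 hπ
  have hn1 : 0 ≤ Real.sin (θ₁/2) := sin_half_nonneg h0 (by linarith)
  have hn2 : 0 ≤ Real.sin (ψ₁/2) := sin_half_nonneg hψ₁0 (by linarith)
  have hn3 : 0 ≤ Real.sin (ψ₂/2) := sin_half_nonneg (by linarith) hψ₂π
  have hn4 : 0 ≤ Real.sin (θ₂/2) := sin_half_nonneg (by linarith) hπ
  have hcn1 : 0 ≤ Real.cos (θ₁/2) := cos_half_nonneg h0 (by linarith)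
  have hcn2 : 0 ≤ Real.cos (ψ₁/2) := cos_half_nonneg hψ₁0 (by linarith)
  have hcn3 : 0 ≤ Real.cos (ψ₂/2) := cos_half_nonneg (by linarith) hψ₂π
  have hcn4 : 0 ≤ Real.cos (θ₂/2) := cos_half_nonneg (by linarith) hπ
  have hAB : A < B := by
    rw [hA, hB]; exact pow_lt_pow_left₀ hs12 hn2 (by norm_num)
  have hττ : τ₁ < τ₂ := by
    rw [hτ₁, hτ₂]
    exact pow_lt_pow_left₀ (sin_half_strict h0 hθlt hπ) hn1 (by norm_num)
  -- key product inequalities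
  have key1 : τ₁ * B ≤ A * τ₂ := by
    rw [hτ₁, hτ₂, hA, hB]
    have h := mul_le_mul hs1 hs2 hn3 hn2
    have hpos : 0 ≤ Real.sin (θ₁/2) * Real.sin (ψ₂/2) := mul_nonneg hn1 hn3
    calc Real.sin (θ₁/2)^2 * Real.sin (ψ₂/2)^2 = (Real.sin (θ₁/2) * Real.sin (ψ₂/2))^2 := by ring
      _ ≤ (Real.sin (ψ₁/2) * Real.sin (θ₂/2))^2 := pow_le_pow_left₀ hpos h 2
      _ = Real.sin (ψ₁/2)^2 * Real.sin (θ₂/2)^2 := by ring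
  have pyth : ∀ φ : ℝ, Real.cos (φ/2)^2 = 1 - Real.sin (φ/2)^2 := by
    intro φ; have := Real.sin_sq_add_cos_sq (φ/2); linarith
  have key2 : (1 - A) * (1 - τ₂) ≤ (1 - B) * (1 - τ₁) := by
    have e1 : 1 - A = Real.cos (ψ₁/2)^2 := by rw [hA, pyth ψ₁]
    have e2 : 1 - B = Real.cos (ψ₂/2)^2 := by rw [hB, pyth ψ₂]
    have e3 : 1 - τ₁ = Real.cos (θ₁/2)^2 := by rw [hτ₁, pyth θ₁]
    have e4 : 1 - τ₂ = Real.cos (θ₂/2)^2 := by rw [hτ₂, pyth θ₂]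
    rw [e1, e2, e3, e4]
    have h := mul_le_mul hc1 hc2 hcn4 hcn1
    have hpos : 0 ≤ Real.cos (ψ₁/2) * Real.cos (θ₂/2) := mul_nonneg hcn2 hcn4
    calc Real.cos (ψ₁/2)^2 * Real.cos (θ₂/2)^2 = (Real.cos (ψ₁/2) * Real.cos (θ₂/2))^2 := by ring
      _ ≤ (Real.cos (θ₁/2) * Real.cos (ψ₂/2))^2 := pow_le_pow_left₀ hpos h 2
      _ = Real.cos (ψ₂/2)^2 * Real.cos (θ₁/2)^2 := by ring
  have hA0 : 0 ≤ A := sq_nonneg _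
  have hτ10 : 0 ≤ τ₁ := sq_nonneg _
  have hB1 : B ≤ 1 := by rw [hB]; exact Real.sin_sq_le_one _
  have hAcos : 1 - 2*A = Real.cos ψ₁ := by rw [hA]; exact one_sub_two_sin_sq ψ₁
  have hBcos : 1 - 2*B = Real.cos ψ₂ := by rw [hB]; exact one_sub_two_sin_sq ψ₂
  clear_value τ₁ τ₂ A B
  -- the affine parameters
  set s : ℝ := (τ₂ - τ₁) / (B - A) with hsdef
  have hs : 0 < s := div_pos (by linarith) (by linarith)
  set c : ℝ := τ₁ - A * s with hcdef
  have hc : c ≤ 0 := by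
    rw [hcdef, sub_nonpos, hsdef]
    rw [← mul_div_assoc, le_div_iff₀ (by linarith)]
    linarith [key1]
  have he : 1 ≤ c + s := by
    have hexp : c + s = τ₁ + (1 - A) * s := by rw [hcdef]; ring
    rw [hexp, hsdef, ← mul_div_assoc, ← sub_le_iff_le_add', le_div_iff₀ (by linarith)]
    linarith [key2]
  have hsne : s ≠ 0 := ne_of_gt hs
  have hτA : τ₁ - c = A * s := by rw [hcdef]; ring
  have hτB : τ₂ - c = B * s := by
    have hBAne : B - A ≠ 0 := ne_of_gt (by linarith)
    rw [hcdef, hsdef]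
    field_simp
    ring
  have hA' : A = (τ₁ - c)/s := by rw [hτA, mul_div_cancel_right₀ _ hsne]
  have hB' : B = (τ₂ - c)/s := by rw [hτB, mul_div_cancel_right₀ _ hsne]
  refine ⟨Polynomial.C (1/2) * (1 + (Polynomial.Chebyshev.T ℝ (m:ℤ)).comp
      (Polynomial.C (1 + 2*c/s) - Polynomial.C (2/s) * Polynomial.X)), ?_, ?_, ?_, ?_⟩
  · -- degree
    refine le_trans (Polynomial.natDegree_mul_le) ?_
    have e0 : (Polynomial.C (1/2) : Polynomial ℝ).natDegree = 0 := Polynomial.natDegree_C _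
    have e1 : ((1 : Polynomial ℝ) + (Polynomial.Chebyshev.T ℝ (m:ℤ)).comp
        (Polynomial.C (1 + 2*c/s) - Polynomial.C (2/s) * Polynomial.X)).natDegree ≤ m := by
      refine le_trans (Polynomial.natDegree_add_le _ _) ?_
      have e2 : ((Polynomial.Chebyshev.T ℝ (m:ℤ)).comp
          (Polynomial.C (1 + 2*c/s) - Polynomial.C (2/s) * Polynomial.X)).natDegree ≤ m := by
        refine le_trans (Polynomial.natDegree_comp_le) ?_
        have e3 : (Polynomial.C (1 + 2*c/s) - Polynomial.C (2/s) * Polynomial.X :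
            Polynomial ℝ).natDegree ≤ 1 := by
          refine le_trans (Polynomial.natDegree_sub_le _ _) ?_
          simp [Polynomial.natDegree_C]
          refine le_trans (Polynomial.natDegree_mul_le) ?_
          simp [Polynomial.natDegree_C]
        have e4 := cheb_natDegree_le m
        calc (Polynomial.Chebyshev.T ℝ (m:ℤ)).natDegree *
            (Polynomial.C (1 + 2*c/s) - Polynomial.C (2/s) * Polynomial.X : Polynomial ℝ).natDegree
            ≤ m * 1 := Nat.mul_le_mul e4 e3
          _ = m := by omega
      simp only [Polynomial.natDegree_one]
      omega
    omega
  · -- range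
    intro t ht0 ht1
    have harg1 : (1:ℝ) + 2*c/s - 2/s * t ≤ 1 := by
      have h1 : 0 ≤ (t - c)/s := div_nonneg (by linarith) hs.le
      have h2 : 1 + 2*c/s - 2/s*t = 1 - 2*((t - c)/s) := by field_simp; ring
      rw [h2]; linarith
    have harg2 : (-1:ℝ) ≤ 1 + 2*c/s - 2/s * t := by
      have h1 : (t - c)/s ≤ 1 := by rw [div_le_one hs]; linarith
      have h2 : 1 + 2*c/s - 2/s*t = 1 - 2*((t - c)/s) := by field_simp; ring
      rw [h2]; linarith
    have habs := cheb_abs_le (m:ℤ) harg2 harg1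
    rw [abs_le] at habs
    simp only [Polynomial.eval_mul, Polynomial.eval_C, Polynomial.eval_add, Polynomial.eval_one,
      Polynomial.eval_comp, Polynomial.eval_sub, Polynomial.eval_X]
    constructor <;> linarith [habs.1, habs.2]
  · -- value at τ₁
    simp only [Polynomial.eval_mul, Polynomial.eval_C, Polynomial.eval_add, Polynomial.eval_one,
      Polynomial.eval_comp, Polynomial.eval_sub, Polynomial.eval_X]
    have h1 : (1:ℝ) + 2*c/s - 2/s * τ₁ = 1 - 2*A := by rw [hA']; field_simp; ring
    rw [h1, hAcos, Polynomial.Chebyshev.T_real_cos]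
    have h2 : ((m:ℤ):ℝ) * ψ₁ = k * π := by rw [hψ₁]; push_cast; field_simp
    rw [h2]; ring
  · -- value at τ₂
    simp only [Polynomial.eval_mul, Polynomial.eval_C, Polynomial.eval_add, Polynomial.eval_one,
      Polynomial.eval_comp, Polynomial.eval_sub, Polynomial.eval_X]
    have h1 : (1:ℝ) + 2*c/s - 2/s * τ₂ = 1 - 2*B := by rw [hB']; field_simp; ring
    rw [h1, hBcos, Polynomial.Chebyshev.T_real_cos]
    have h2 : ((m:ℤ):ℝ) * ψ₂ = (k+1) * π := by rw [hψ₂]; push_cast; field_simp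
    rw [h2]; ring


lemma exists_k (m : ℕ) (hm : 1 ≤ m) (θ₁ θ₂ : ℝ) (h0 : 0 ≤ θ₁)
    (h3 : θ₁ + 3 * π / m ≤ θ₂) (v : ℝ) (hv : v = 1 ∨ v = -1) :
    ∃ k : ℤ, θ₁ ≤ k * π / m ∧ (k + 1) * π / m ≤ θ₂ ∧
      Real.cos (k * π) = v ∧ Real.cos ((k + 1) * π) = -v := by
  have hπ0 := Real.pi_pos
  have hm0 : (0:ℝ) < m := by exact_mod_cast hm
  have key : ∀ k : ℤ, (m:ℝ) * θ₁ / π ≤ k → (k:ℝ) < (m:ℝ) * θ₁ / π + 2 →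
      θ₁ ≤ k * π / m ∧ (k + 1) * π / m ≤ θ₂ := by
    intro k hk1 hk2
    constructor
    · rw [le_div_iff₀ hm0]
      rw [div_le_iff₀ hπ0] at hk1
      linarith
    · rw [div_le_iff₀ hm0]
      have : ((k:ℝ) + 1) < (m:ℝ) * θ₁ / π + 3 := by linarith
      have h4 : ((k:ℝ) + 1) * π < ((m:ℝ) * θ₁ / π + 3) * π := by
        exact mul_lt_mul_of_pos_right this hπ0
      have h5 : ((m:ℝ) * θ₁ / π + 3) * π = m * θ₁ + 3 * π := by field_simp
      have h6 : (m:ℝ) * θ₁ + 3 * π ≤ θ₂ * m := by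
        have h7 : (θ₁ + 3*π/(m:ℝ)) * m ≤ θ₂ * m := mul_le_mul_of_nonneg_right h3 hm0.le
        have h8 : (θ₁ + 3*π/(m:ℝ)) * m = m*θ₁ + 3*π := by field_simp
        linarith
      linarith
  have hhalf : (m:ℝ)*θ₁/π = 2*((m:ℝ)*θ₁/(2*π)) := by
    field_simp
  have hhalf2 : 2*(((m:ℝ)*θ₁/π - 1)/2) = (m:ℝ)*θ₁/π - 1 := by ring
  rcases hv with hv | hv
  · -- even k
    refine ⟨2 * ⌈(m:ℝ) * θ₁ / (2 * π)⌉, ?_, ?_, ?_, ?_⟩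
    · exact (key _ (by push_cast; linarith [Int.le_ceil ((m:ℝ) * θ₁ / (2*π))])
        (by push_cast; linarith [Int.ceil_lt_add_one ((m:ℝ) * θ₁ / (2*π))])).1
    · exact (key _ (by push_cast; linarith [Int.le_ceil ((m:ℝ) * θ₁ / (2*π))])
        (by push_cast; linarith [Int.ceil_lt_add_one ((m:ℝ) * θ₁ / (2*π))])).2
    · rw [hv]
      have : ((2 * ⌈(m:ℝ) * θ₁ / (2*π)⌉ : ℤ) : ℝ) * π = (⌈(m:ℝ) * θ₁ / (2*π)⌉ : ℝ) * (2 * π) := by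
        push_cast; ring
      rw [this, Real.cos_int_mul_two_pi]
    · rw [hv]
      have : ((2 * ⌈(m:ℝ) * θ₁ / (2*π)⌉ + 1 : ℤ) : ℝ) * π
          = (⌈(m:ℝ) * θ₁ / (2*π)⌉ : ℝ) * (2 * π) + π := by push_cast; ring
      push_cast
      rw [show ((2:ℝ) * ⌈(m:ℝ) * θ₁ / (2*π)⌉ + 1) * π
          = (⌈(m:ℝ) * θ₁ / (2*π)⌉ : ℝ) * (2 * π) + π by ring]
      rw [Real.cos_add_pi, Real.cos_int_mul_two_pi]
  · -- odd k
    refine ⟨2 * ⌈((m:ℝ) * θ₁ / π - 1) / 2⌉ + 1, ?_, ?_, ?_, ?_⟩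
    · exact (key _ (by push_cast; linarith [Int.le_ceil (((m:ℝ) * θ₁ / π - 1) / 2)])
        (by push_cast; linarith [Int.ceil_lt_add_one (((m:ℝ) * θ₁ / π - 1) / 2)])).1
    · exact (key _ (by push_cast; linarith [Int.le_ceil (((m:ℝ) * θ₁ / π - 1) / 2)])
        (by push_cast; linarith [Int.ceil_lt_add_one (((m:ℝ) * θ₁ / π - 1) / 2)])).2
    · rw [hv]
      push_cast
      rw [show ((2:ℝ) * ⌈((m:ℝ) * θ₁ / π - 1) / 2⌉ + 1) * π
          = (⌈((m:ℝ) * θ₁ / π - 1) / 2⌉ : ℝ) * (2 * π) + π by ring]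
      rw [Real.cos_add_pi, Real.cos_int_mul_two_pi]
    · rw [hv]
      push_cast
      rw [show ((2:ℝ) * ⌈((m:ℝ) * θ₁ / π - 1) / 2⌉ + 1 + 1) * π
          = (⌈((m:ℝ) * θ₁ / π - 1) / 2⌉ + 1 : ℝ) * (2 * π) by ring]
      rw [show ((⌈((m:ℝ) * θ₁ / π - 1) / 2⌉ : ℝ) + 1) = ((⌈((m:ℝ) * θ₁ / π - 1) / 2⌉ + 1 : ℤ) : ℝ) by push_cast; ring]
      rw [Real.cos_int_mul_two_pi]; ring


lemma eval_aeval {d : ℕ} (q : Polynomial ℝ) (L : MvPolynomial (Fin d) ℝ) (v : Fin d → ℝ) :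
    MvPolynomial.eval v (Polynomial.aeval L q) = Polynomial.eval (MvPolynomial.eval v L) q := by
  rw [Polynomial.aeval_def, Polynomial.hom_eval₂]
  have h : (MvPolynomial.eval v).comp (algebraMap ℝ (MvPolynomial (Fin d) ℝ)) = RingHom.id ℝ := by
    ext r; simp
  rw [h]
  rfl

lemma totalDegree_aeval_le {d : ℕ} (q : Polynomial ℝ) (L : MvPolynomial (Fin d) ℝ)
    (hL : L.totalDegree ≤ 1) : (Polynomial.aeval L q).totalDegree ≤ q.natDegree := by
  rw [Polynomial.aeval_eq_sum_range]
  refine le_trans (MvPolynomial.totalDegree_finset_sum _ _) ?_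
  apply Finset.sup_le
  intro i hi
  refine le_trans (MvPolynomial.totalDegree_smul_le _ _) ?_
  refine le_trans (MvPolynomial.totalDegree_pow _ _) ?_
  have hii : i ≤ q.natDegree := by
    simpa [Finset.mem_range, Nat.lt_succ_iff] using hi
  calc i * L.totalDegree ≤ i * 1 := Nat.mul_le_mul_left _ hL
    _ = i := by omega
    _ ≤ _ := hii


open scoped InnerProductSpace

/-- `a_ξ = min_{z ∈ Ω} z·ξ`. -/
noncomputable def dubA {d : ℕ} (Ω : Set (EuclideanSpace ℝ (Fin d)))
    (ξ : EuclideanSpace ℝ (Fin d)) : ℝ :=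
  sInf ((fun z => ⟪z, ξ⟫_ℝ) '' Ω)

/-- The Dubiner-type metric
`ρ_Ω(x,y) = max_{ξ ∈ S^{d-1}} |√(x·ξ - a_ξ) - √(y·ξ - a_ξ)|`. -/
noncomputable def dubMetric {d : ℕ} (Ω : Set (EuclideanSpace ℝ (Fin d)))
    (x y : EuclideanSpace ℝ (Fin d)) : ℝ :=
  ⨆ ξ : Metric.sphere (0 : EuclideanSpace ℝ (Fin d)) 1,
    |Real.sqrt (⟪x, (ξ : EuclideanSpace ℝ (Fin d))⟫_ℝ - dubA Ω ξ) -
      Real.sqrt (⟪y, (ξ : EuclideanSpace ℝ (Fin d))⟫_ℝ - dubA Ω ξ)|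


set_option maxHeartbeats 2000000 in
theorem resolving_polynomial {d : ℕ} (hd : 1 ≤ d) (Ω : Set (EuclideanSpace ℝ (Fin d)))
    (hΩc : IsCompact Ω) (hΩconv : Convex ℝ Ω)
    (h1 : Metric.closedBall (0 : EuclideanSpace ℝ (Fin d)) 1 ⊆ Ω)
    (h2 : Ω ⊆ Metric.closedBall (0 : EuclideanSpace ℝ (Fin d)) d)
    (n : ℕ) (hn : 2 ≤ n) (x y : EuclideanSpace ℝ (Fin d)) (hx : x ∈ Ω) (hy : y ∈ Ω)
    (hsep : 2 * Real.pi * Real.sqrt (2 * d) / (n - 1) ≤ dubMetric Ω x y) :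
    ∃ P : MvPolynomial (Fin d) ℝ, P.totalDegree ≤ n ∧
      MvPolynomial.eval (fun i => y i) P = 1 ∧
      MvPolynomial.eval (fun i => x i) P = 0 ∧
      ∀ z ∈ Ω, 0 ≤ MvPolynomial.eval (fun i => z i) P ∧
        MvPolynomial.eval (fun i => z i) P ≤ 1 := by
  classical
  have hπ0 := Real.pi_pos
  have hd1 : (1:ℝ) ≤ (d:ℝ) := by exact_mod_cast hd
  have hdpos : (0:ℝ) < 2 * d := by linarith
  have hsq : (0:ℝ) < Real.sqrt (2 * d) := Real.sqrt_pos.mpr hdpos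
  have hn2 : (2:ℝ) ≤ (n:ℝ) := by exact_mod_cast hn
  have hn1 : (0:ℝ) < (n:ℝ) - 1 := by linarith
  set m : ℕ := n - 1 with hmdef
  have hm1 : 1 ≤ m := by omega
  have hmr : (m:ℝ) = (n:ℝ) - 1 := by
    have := Nat.cast_sub (show 1 ≤ n by omega) (R := ℝ)
    simpa [hmdef] using this
  set R : ℝ := 2 * Real.pi * Real.sqrt (2 * d) / ((n:ℝ) - 1) with hRdef
  have hR : 0 < R := div_pos (by positivity) hn1
  haveI : Nonempty (Metric.sphere (0 : EuclideanSpace ℝ (Fin d)) 1) := by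
    refine ⟨⟨EuclideanSpace.single ⟨0, hd⟩ (1:ℝ), ?_⟩⟩
    rw [mem_sphere_zero_iff_norm, EuclideanSpace.norm_single]
    norm_num
  have hlt : (3/4) * R < dubMetric Ω x y := by
    have : (3/4) * R < R := by linarith
    calc (3/4) * R < R := this
      _ ≤ dubMetric Ω x y := hsep
  rw [dubMetric] at hlt
  obtain ⟨ξ, hξ⟩ := exists_lt_of_lt_ciSup hlt
  set ξv : EuclideanSpace ℝ (Fin d) := (ξ : EuclideanSpace ℝ (Fin d)) with hξvdef
  have hξn : ‖ξv‖ = 1 := by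
    have := ξ.2
    rwa [mem_sphere_zero_iff_norm] at this
  set a : ℝ := dubA Ω ξv with hadef
  have h0Ω : (0 : EuclideanSpace ℝ (Fin d)) ∈ Ω := h1 (by simp)
  have hbound : ∀ z ∈ Ω, |⟪z, ξv⟫_ℝ| ≤ (d:ℝ) := by
    intro z hz
    have h := abs_real_inner_le_norm z ξv
    have hz' : ‖z‖ ≤ (d:ℝ) := by
      have := h2 hz
      rwa [Metric.mem_closedBall, dist_zero_right] at this
    calc |⟪z, ξv⟫_ℝ| ≤ ‖z‖ * ‖ξv‖ := h
      _ = ‖z‖ := by rw [hξn, mul_one]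
      _ ≤ (d:ℝ) := hz'
  have hbdd : BddBelow ((fun z => ⟪z, ξv⟫_ℝ) '' Ω) := by
    refine ⟨-(d:ℝ), ?_⟩
    rintro _ ⟨z, hz, rfl⟩
    have := abs_le.mp (hbound z hz)
    exact this.1
  have hne : ((fun z => ⟪z, ξv⟫_ℝ) '' Ω).Nonempty := ⟨_, ⟨0, h0Ω, rfl⟩⟩
  have ha_le : ∀ z ∈ Ω, a ≤ ⟪z, ξv⟫_ℝ := by
    intro z hz
    exact csInf_le hbdd ⟨z, hz, rfl⟩
  -- normalized linear functional
  set τ : EuclideanSpace ℝ (Fin d) → ℝ := fun z => (⟪z, ξv⟫_ℝ - a) / (2 * d) with hτdef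
  have hτ01 : ∀ z ∈ Ω, 0 ≤ τ z ∧ τ z ≤ 1 := by
    intro z hz
    constructor
    · apply div_nonneg _ hdpos.le
      linarith [ha_le z hz]
    · rw [hτdef]
      simp only
      rw [div_le_one hdpos]
      have hub := (abs_le.mp (hbound z hz)).2
      have hlb := (abs_le.mp (hbound (0:EuclideanSpace ℝ (Fin d)) h0Ω)).1
      have ha_ge : -(d:ℝ) ≤ a := by
        rw [hadef, dubA]
        apply le_csInf hne
        rintro _ ⟨w, hw, rfl⟩
        exact (abs_le.mp (hbound w hw)).1
      linarith
  -- angles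
  set θf : EuclideanSpace ℝ (Fin d) → ℝ := fun z => 2 * Real.arcsin (Real.sqrt (τ z)) with hθdef
  have hθ0 : ∀ z ∈ Ω, 0 ≤ θf z := by
    intro z hz
    have := Real.arcsin_nonneg.mpr (Real.sqrt_nonneg (τ z))
    simp only [hθdef]
    linarith
  have hθπ : ∀ z ∈ Ω, θf z ≤ Real.pi := by
    intro z hz
    have := Real.arcsin_le_pi_div_two (Real.sqrt (τ z))
    simp only [hθdef]
    linarith
  have hsin : ∀ z ∈ Ω, Real.sin (θf z / 2) ^ 2 = τ z := by
    intro z hz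
    obtain ⟨h0', h1'⟩ := hτ01 z hz
    have hs1 : Real.sqrt (τ z) ≤ 1 := Real.sqrt_le_one.mpr h1'
    simp only [hθdef]
    rw [show (2 * Real.arcsin (Real.sqrt (τ z))) / 2 = Real.arcsin (Real.sqrt (τ z)) by ring]
    rw [Real.sin_arcsin (by linarith [Real.sqrt_nonneg (τ z)]) hs1]
    exact Real.sq_sqrt h0'
  -- the angle gap
  have hsqrtτ : ∀ z ∈ Ω, Real.sqrt (τ z) =
      Real.sqrt (⟪z, ξv⟫_ℝ - a) / Real.sqrt (2 * d) := by
    intro z hz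
    rw [hτdef]
    exact Real.sqrt_div (by linarith [ha_le z hz]) _
  have hgap : 3 * Real.pi / (m:ℝ) < |θf x - θf y| := by
    have harc : |Real.sqrt (τ x) - Real.sqrt (τ y)| ≤
        |Real.arcsin (Real.sqrt (τ x)) - Real.arcsin (Real.sqrt (τ y))| := by
      have hx1 : Real.sqrt (τ x) ≤ 1 := Real.sqrt_le_one.mpr (hτ01 x hx).2
      have hy1 : Real.sqrt (τ y) ≤ 1 := Real.sqrt_le_one.mpr (hτ01 y hy).2
      have ex : Real.sqrt (τ x) = Real.sin (Real.arcsin (Real.sqrt (τ x))) :=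
        (Real.sin_arcsin (by linarith [Real.sqrt_nonneg (τ x)]) hx1).symm
      have ey : Real.sqrt (τ y) = Real.sin (Real.arcsin (Real.sqrt (τ y))) :=
        (Real.sin_arcsin (by linarith [Real.sqrt_nonneg (τ y)]) hy1).symm
      calc |Real.sqrt (τ x) - Real.sqrt (τ y)|
          = |Real.sin (Real.arcsin (Real.sqrt (τ x))) - Real.sin (Real.arcsin (Real.sqrt (τ y)))| := by
            rw [← ex, ← ey]
        _ ≤ _ := sin_lip _ _
    have hδ : |Real.sqrt (τ x) - Real.sqrt (τ y)| =
        |Real.sqrt (⟪x, ξv⟫_ℝ - a) - Real.sqrt (⟪y, ξv⟫_ℝ - a)| / Real.sqrt (2 * d) := by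
      rw [hsqrtτ x hx, hsqrtτ y hy, div_sub_div_same, abs_div, abs_of_pos hsq]
    have habs2 : |θf x - θf y| =
        2 * |Real.arcsin (Real.sqrt (τ x)) - Real.arcsin (Real.sqrt (τ y))| := by
      rw [show θf x - θf y =
        2 * (Real.arcsin (Real.sqrt (τ x)) - Real.arcsin (Real.sqrt (τ y))) by
          simp only [hθdef]; ring]
      rw [abs_mul]
      norm_num
    have hDlb : (3/4) * R < |Real.sqrt (⟪x, ξv⟫_ℝ - a) - Real.sqrt (⟪y, ξv⟫_ℝ - a)| := hξ
    have hfinal : 3 * Real.pi / (m:ℝ) = 2 * ((3/4) * R) / Real.sqrt (2 * d) := by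
      rw [hRdef, hmr]
      field_simp
      ring
    rw [habs2, hfinal]
    calc 2 * ((3/4) * R) / Real.sqrt (2 * d)
        < 2 * |Real.sqrt (⟪x, ξv⟫_ℝ - a) - Real.sqrt (⟪y, ξv⟫_ℝ - a)| / Real.sqrt (2 * d) := by
          gcongr
      _ = 2 * (|Real.sqrt (⟪x, ξv⟫_ℝ - a) - Real.sqrt (⟪y, ξv⟫_ℝ - a)| / Real.sqrt (2 * d)) := by
          ring
      _ = 2 * |Real.sqrt (τ x) - Real.sqrt (τ y)| := by rw [hδ]
      _ ≤ 2 * |Real.arcsin (Real.sqrt (τ x)) - Real.arcsin (Real.sqrt (τ y))| := by linarith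
  -- the univariate polynomial
  obtain ⟨q, hqdeg, hqrange, hqy, hqx⟩ :
      ∃ q : Polynomial ℝ, q.natDegree ≤ m ∧
        (∀ t, 0 ≤ t → t ≤ 1 → 0 ≤ Polynomial.eval t q ∧ Polynomial.eval t q ≤ 1) ∧
        Polynomial.eval (τ y) q = 1 ∧ Polynomial.eval (τ x) q = 0 := by
    rcases le_total (θf y) (θf x) with hc | hc
    · have h3 : θf y + 3 * Real.pi / m ≤ θf x := by
        rw [abs_of_nonneg (by linarith)] at hgap
        linarith
      obtain ⟨k, hk1, hk2, hkc1, hkc2⟩ :=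
        exists_k m hm1 (θf y) (θf x) (hθ0 y hy) h3 1 (Or.inl rfl)
      obtain ⟨q, hdq, hrange, hv1, hv2⟩ :=
        univ_core m hm1 k (θf y) (θf x) (hθ0 y hy) (hθπ x hx) hk1 hk2
      rw [hsin y hy, hkc1] at hv1
      rw [hsin x hx, hkc2] at hv2
      norm_num at hv1 hv2
      exact ⟨q, hdq, hrange, hv1, hv2⟩
    · have h3 : θf x + 3 * Real.pi / m ≤ θf y := by
        rw [abs_sub_comm, abs_of_nonneg (by linarith)] at hgap
        linarith
      obtain ⟨k, hk1, hk2, hkc1, hkc2⟩ :=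
        exists_k m hm1 (θf x) (θf y) (hθ0 x hx) h3 (-1) (Or.inr rfl)
      obtain ⟨q, hdq, hrange, hv1, hv2⟩ :=
        univ_core m hm1 k (θf x) (θf y) (hθ0 x hx) (hθπ y hy) hk1 hk2
      rw [hsin x hx, hkc1] at hv1
      rw [hsin y hy, hkc2] at hv2
      norm_num at hv1 hv2
      exact ⟨q, hdq, hrange, hv2, hv1⟩
  -- the multivariate polynomial
  set L : MvPolynomial (Fin d) ℝ := MvPolynomial.C ((2 * (d:ℝ))⁻¹) *
      ((∑ i : Fin d, MvPolynomial.C (ξv i) * MvPolynomial.X i) - MvPolynomial.C a) with hLdef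
  have hLeval : ∀ z : EuclideanSpace ℝ (Fin d),
      MvPolynomial.eval (fun i => z i) L = τ z := by
    intro z
    have hinner : ⟪z, ξv⟫_ℝ = ∑ i, z i * ξv i := by
      simp [PiLp.inner_apply, RCLike.inner_apply, conj_trivial]
      exact Finset.sum_congr rfl (fun _ _ => mul_comm _ _)
    simp only [hLdef, MvPolynomial.eval_mul, MvPolynomial.eval_C, MvPolynomial.eval_sub,
      MvPolynomial.eval_sum, MvPolynomial.eval_X, hτdef]
    rw [hinner]
    have hcomm : ∑ i, ξv i * z i = ∑ i, z i * ξv i := by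
      apply Finset.sum_congr rfl
      intros
      ring
    rw [hcomm]
    ring
  have hLdeg : L.totalDegree ≤ 1 := by
    rw [hLdef]
    refine le_trans (MvPolynomial.totalDegree_mul _ _) ?_
    rw [MvPolynomial.totalDegree_C]
    rw [zero_add]
    rw [sub_eq_add_neg]
    refine le_trans (MvPolynomial.totalDegree_add _ _) ?_
    simp only [MvPolynomial.totalDegree_neg, MvPolynomial.totalDegree_C]
    refine max_le ?_ (by omega)
    refine le_trans (MvPolynomial.totalDegree_finset_sum _ _) ?_
    apply Finset.sup_le
    intro i _
    refine le_trans (MvPolynomial.totalDegree_mul _ _) ?_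
    rw [MvPolynomial.totalDegree_C, MvPolynomial.totalDegree_X]
  refine ⟨Polynomial.aeval L q, ?_, ?_, ?_, ?_⟩
  · exact le_trans (totalDegree_aeval_le q L hLdeg) (le_trans hqdeg (by omega))
  · rw [eval_aeval, hLeval]; exact hqy
  · rw [eval_aeval, hLeval]; exact hqx
  · intro z hz
    rw [eval_aeval, hLeval]
    exact hqrange (τ z) (hτ01 z hz).1 (hτ01 z hz).2
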